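/- Suppose E ⊆ ℝⁿ is intervally thin. Let P and Q be distinct (n−1)-dimensional affine hyperplanes in ℝⁿ, let p ∈ P, q ∈ Q, and r > 0. Then there exist points a ∈ P ∩ B(p,r) and b ∈ Q ∩ B(q,r) such that the line segment [a,b] is disjoint from E. -/

import Mathlib

open Set Metric

/-- A set `E ⊆ ℝⁿ` is *intervally thin* if for all `a, b ∈ ℝⁿ` and `ε > 0` there exist `a', b'`
with `|a - a'| < ε`, `|b - b'| < ε` such that the segment `[a', b']` is disjoint from `E`. -/
def IntervallyThin {n : ℕ} (E : Set (EuclideanSpace ℝ (Fin n))) : Prop :=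
  ∀ a b : EuclideanSpace ℝ (Fin n), ∀ ε > 0, ∃ a' b' : EuclideanSpace ℝ (Fin n),
    dist a a' < ε ∧ dist b b' < ε ∧ ∀ x ∈ segment ℝ a' b', x ∉ E

lemma hyperplane_functional {n : ℕ} (hn : 0 < n) (D : Submodule ℝ (EuclideanSpace ℝ (Fin n)))
    (hD : Module.finrank ℝ D = n - 1) :
    ∃ f : EuclideanSpace ℝ (Fin n) →L[ℝ] ℝ, ∀ x, f x = 0 ↔ x ∈ D := by
  have hfin : Module.finrank ℝ (EuclideanSpace ℝ (Fin n)) = n := finrank_euclideanSpace_fin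
  have hDne : D ≠ ⊤ := by
    intro h
    rw [h, finrank_top, hfin] at hD
    omega
  have horth : Dᗮ ≠ ⊥ := by
    rwa [ne_eq, Submodule.orthogonal_eq_bot_iff]
  obtain ⟨v, hvD, hv0⟩ := Submodule.ne_bot_iff _ |>.mp horth
  refine ⟨innerSL ℝ v, ?_⟩
  have hle : D ≤ LinearMap.ker ((innerSL ℝ v) : EuclideanSpace ℝ (Fin n) →ₗ[ℝ] ℝ) := by
    intro x hx
    simp only [LinearMap.mem_ker]
    exact (Submodule.mem_orthogonal' D v).mp hvD x hx
  have hfne : ((innerSL ℝ v) : EuclideanSpace ℝ (Fin n) →ₗ[ℝ] ℝ) ≠ 0 := by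
    intro h
    have h2 := LinearMap.congr_fun h v
    rw [LinearMap.zero_apply, ContinuousLinearMap.coe_coe, innerSL_apply_apply] at h2
    exact hv0 (inner_self_eq_zero.mp h2)
  have hker : Module.finrank ℝ
      (LinearMap.ker ((innerSL ℝ v) : EuclideanSpace ℝ (Fin n) →ₗ[ℝ] ℝ)) = n - 1 := by
    have h1 := LinearMap.finrank_range_add_finrank_ker
      ((innerSL ℝ v) : EuclideanSpace ℝ (Fin n) →ₗ[ℝ] ℝ)
    rw [hfin] at h1
    have hr : Module.finrank ℝ
        (LinearMap.range ((innerSL ℝ v) : EuclideanSpace ℝ (Fin n) →ₗ[ℝ] ℝ)) = 1 := by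
      have hrne : LinearMap.range ((innerSL ℝ v) : EuclideanSpace ℝ (Fin n) →ₗ[ℝ] ℝ) ≠ ⊥ := by
        rw [ne_eq, LinearMap.range_eq_bot]
        exact hfne
      have hle1 : Module.finrank ℝ
          (LinearMap.range ((innerSL ℝ v) : EuclideanSpace ℝ (Fin n) →ₗ[ℝ] ℝ)) ≤ 1 := by
        have := Submodule.finrank_le
          (LinearMap.range ((innerSL ℝ v) : EuclideanSpace ℝ (Fin n) →ₗ[ℝ] ℝ))
        rwa [Module.finrank_self] at this
      have hge1 : Module.finrank ℝ
          (LinearMap.range ((innerSL ℝ v) : EuclideanSpace ℝ (Fin n) →ₗ[ℝ] ℝ)) ≠ 0 := by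
        rw [ne_eq, Submodule.finrank_eq_zero]
        exact hrne
      omega
    omega
  have heq : D = LinearMap.ker ((innerSL ℝ v) : EuclideanSpace ℝ (Fin n) →ₗ[ℝ] ℝ) := by
    apply Submodule.eq_of_le_of_finrank_le hle
    rw [hker, hD]
  intro x
  constructor
  · intro hx
    rw [heq]
    exact LinearMap.mem_ker.mpr hx
  · intro hx
    rw [heq] at hx
    exact hx

lemma aux_pick {V : Type*} [NormedAddCommGroup V] [NormedSpace ℝ V]
    (f : V →L[ℝ] ℝ) (D : Submodule ℝ V) (u : V) (δ : ℝ) (hδ : 0 < δ)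
    (h : f u = 0 → ∃ w₀ ∈ D, f w₀ ≠ 0) :
    ∃ w ∈ D, ‖w‖ < δ ∧ f (u + w) ≠ 0 := by
  by_cases hfu : f u = 0
  · obtain ⟨w₀, hw₀D, hw₀⟩ := h hfu
    have hw₀0 : w₀ ≠ 0 := fun h0 => hw₀ (by simp [h0])
    have hn0 : (0:ℝ) < ‖w₀‖ := norm_pos_iff.mpr hw₀0
    refine ⟨(δ / (2 * ‖w₀‖)) • w₀, D.smul_mem _ hw₀D, ?_, ?_⟩
    · rw [norm_smul, Real.norm_eq_abs, abs_of_pos (by positivity)]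
      rw [div_mul_eq_mul_div, mul_comm]
      rw [div_lt_iff₀ (by positivity)]
      nlinarith
    · rw [map_add, hfu, map_smul, smul_eq_mul, zero_add]
      exact mul_ne_zero (by positivity) hw₀
  · exact ⟨0, D.zero_mem, by simpa using hδ, by simpa using hfu⟩

lemma crossing {V : Type*} [NormedAddCommGroup V] [NormedSpace ℝ V]
    (f : V →L[ℝ] ℝ) (a₀ b₀ a' b' : V) (t ε K : ℝ) (ht0 : 1/4 ≤ t) (ht1 : t ≤ 3/4)
    (hK0 : 0 < K) (hK : K ≤ |f b₀ - f a₀|)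
    (hε : 0 ≤ ε) (ha : ‖a' - a₀‖ ≤ ε) (hb : ‖b' - b₀‖ ≤ ε)
    (hsmall : ‖f‖ * ε ≤ K / 16) :
    ∃ x ∈ segment ℝ a' b', f x = f (a₀ + t • (b₀ - a₀)) ∧
      ‖x - (a₀ + t • (b₀ - a₀))‖ ≤ ε + ‖b₀ - a₀‖ * (3 * ‖f‖ * ε / K) := by
  set η := ‖f‖ * ε with hη
  have hη0 : 0 ≤ η := mul_nonneg (norm_nonneg f) hε
  have hea : |f a₀ - f a'| ≤ η := by
    have : f a₀ - f a' = f (a₀ - a') := by rw [map_sub]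
    rw [this, ← Real.norm_eq_abs]
    calc ‖f (a₀ - a')‖ ≤ ‖f‖ * ‖a₀ - a'‖ := f.le_opNorm _
      _ ≤ ‖f‖ * ε := by
          apply mul_le_mul_of_nonneg_left _ (norm_nonneg f)
          rwa [norm_sub_rev]
  have heb : |f b₀ - f b'| ≤ η := by
    have : f b₀ - f b' = f (b₀ - b') := by rw [map_sub]
    rw [this, ← Real.norm_eq_abs]
    calc ‖f (b₀ - b')‖ ≤ ‖f‖ * ‖b₀ - b'‖ := f.le_opNorm _
      _ ≤ ‖f‖ * ε := by
          apply mul_le_mul_of_nonneg_left _ (norm_nonneg f)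
          rwa [norm_sub_rev]
  set Dn := f b' - f a' with hDn
  have hDnabs : 7 * K / 8 ≤ |Dn| := by
    have h1 : |f b₀ - f a₀| - |Dn| ≤ |(f b₀ - f a₀) - Dn| := abs_sub_abs_le_abs_sub _ _
    have h2 : (f b₀ - f a₀) - Dn = (f b₀ - f b') - (f a₀ - f a') := by rw [hDn]; ring
    have h3 : |(f b₀ - f b') - (f a₀ - f a')| ≤ |f b₀ - f b'| + |f a₀ - f a'| := abs_sub _ _
    rw [h2] at h1
    linarith
  have hDn0 : Dn ≠ 0 := by
    intro h0
    rw [h0, abs_zero] at hDnabs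
    linarith
  set c := f a₀ + t * (f b₀ - f a₀) with hc
  have hfc : f (a₀ + t • (b₀ - a₀)) = c := by
    rw [map_add, map_smul, map_sub, smul_eq_mul, hc]
  set s := (c - f a') / Dn with hs
  have hnum : c - f a' - t * Dn = (1 - t) * (f a₀ - f a') + t * (f b₀ - f b') := by
    simp only [hc, hDn]; ring
  have hst : |s - t| * |Dn| ≤ η := by
    have : s - t = (c - f a' - t * Dn) / Dn := by field_simp [hs]; rw [hs, sub_mul, div_mul_cancel₀ _ hDn0]
    rw [this, abs_div, div_mul_cancel₀ _ (abs_ne_zero.mpr hDn0)]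
    rw [hnum]
    calc |(1 - t) * (f a₀ - f a') + t * (f b₀ - f b')|
        ≤ |(1 - t) * (f a₀ - f a')| + |t * (f b₀ - f b')| := abs_add_le _ _
      _ = (1 - t) * |f a₀ - f a'| + t * |f b₀ - f b'| := by
          rw [abs_mul, abs_mul, abs_of_nonneg (by linarith : (0:ℝ) ≤ 1 - t),
            abs_of_nonneg (by linarith : (0:ℝ) ≤ t)]
      _ ≤ (1 - t) * η + t * η := by
          apply add_le_add
          · exact mul_le_mul_of_nonneg_left hea (by linarith)
          · exact mul_le_mul_of_nonneg_left heb (by linarith)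
      _ = η := by ring
  have hstK : |s - t| ≤ 8 * η / (7 * K) := by
    have h1 : |s - t| * (7 * K / 8) ≤ η := by
      calc |s - t| * (7 * K / 8) ≤ |s - t| * |Dn| :=
            mul_le_mul_of_nonneg_left hDnabs (abs_nonneg _)
        _ ≤ η := hst
    rw [le_div_iff₀ (by positivity : (0:ℝ) < 7 * K)]
    nlinarith [abs_nonneg (s - t)]
  have hst14 : |s - t| ≤ 1 / 14 := by
    calc |s - t| ≤ 8 * η / (7 * K) := hstK
      _ ≤ 1 / 14 := by rw [div_le_div_iff₀ (by positivity) (by norm_num)]; nlinarith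
  have hs0 : 0 ≤ s := by
    have := abs_le.mp hst14
    linarith [this.1]
  have hs1 : s ≤ 1 := by
    have := abs_le.mp hst14
    linarith [this.2]
  refine ⟨a' + s • (b' - a'), ?_, ?_, ?_⟩
  · rw [segment_eq_image']
    exact ⟨s, ⟨hs0, hs1⟩, rfl⟩
  · rw [hfc]
    rw [map_add, map_smul, map_sub, smul_eq_mul]
    rw [hs]
    field_simp
    rw [hDn]; ring
  · have hdecomp : a' + s • (b' - a') - (a₀ + t • (b₀ - a₀)) =
        (1 - s) • (a' - a₀) + s • (b' - b₀) + (s - t) • (b₀ - a₀) := by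
      module
    rw [hdecomp]
    have h1 : ‖(1 - s) • (a' - a₀) + s • (b' - b₀) + (s - t) • (b₀ - a₀)‖
        ≤ (1 - s) * ε + s * ε + |s - t| * ‖b₀ - a₀‖ := by
      calc ‖(1 - s) • (a' - a₀) + s • (b' - b₀) + (s - t) • (b₀ - a₀)‖
          ≤ ‖(1 - s) • (a' - a₀) + s • (b' - b₀)‖ + ‖(s - t) • (b₀ - a₀)‖ := norm_add_le _ _
        _ ≤ ‖(1 - s) • (a' - a₀)‖ + ‖s • (b' - b₀)‖ + ‖(s - t) • (b₀ - a₀)‖ := by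
            have := norm_add_le ((1 - s) • (a' - a₀)) (s • (b' - b₀)); linarith
        _ ≤ (1 - s) * ε + s * ε + |s - t| * ‖b₀ - a₀‖ := by
            rw [norm_smul, norm_smul, norm_smul, Real.norm_eq_abs, Real.norm_eq_abs,
              Real.norm_eq_abs, abs_of_nonneg (by linarith : (0:ℝ) ≤ 1 - s),
              abs_of_nonneg hs0]
            refine add_le_add (add_le_add ?_ ?_) le_rfl
            · exact mul_le_mul_of_nonneg_left ha (by linarith)
            · exact mul_le_mul_of_nonneg_left hb hs0
    have h2 : |s - t| * ‖b₀ - a₀‖ ≤ ‖b₀ - a₀‖ * (3 * ‖f‖ * ε / K) := by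
      rw [mul_comm]
      apply mul_le_mul_of_nonneg_left _ (norm_nonneg _)
      calc |s - t| ≤ 8 * η / (7 * K) := hstK
        _ ≤ 3 * ‖f‖ * ε / K := by
            rw [div_le_div_iff₀ (by positivity) hK0, hη]
            nlinarith [mul_nonneg (mul_nonneg (norm_nonneg f) hε) hK0.le]
    calc ‖(1 - s) • (a' - a₀) + s • (b' - b₀) + (s - t) • (b₀ - a₀)‖
        ≤ (1 - s) * ε + s * ε + |s - t| * ‖b₀ - a₀‖ := h1
      _ ≤ ε + ‖b₀ - a₀‖ * (3 * ‖f‖ * ε / K) := by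
          have hr : (1 - s) * ε + s * ε = ε := by ring
          linarith

set_option maxHeartbeats 1600000 in
/-- If `E ⊆ ℝⁿ` is intervally thin and `P, Q` are distinct `(n-1)`-dimensional affine
hyperplanes, then for any `p ∈ P`, `q ∈ Q`, `r > 0` the sets `P ∩ B(p,r)` and `Q ∩ B(q,r)`
can be connected by a line segment disjoint from `E`. -/
theorem intervallyThin_connect_hyperplanes {n : ℕ} (E : Set (EuclideanSpace ℝ (Fin n)))
    (hE : IntervallyThin E) (P Q : AffineSubspace ℝ (EuclideanSpace ℝ (Fin n)))
    (hPdim : Module.finrank ℝ P.direction = n - 1)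
    (hQdim : Module.finrank ℝ Q.direction = n - 1)
    (hPQ : P ≠ Q) (p : EuclideanSpace ℝ (Fin n)) (hp : p ∈ P)
    (q : EuclideanSpace ℝ (Fin n)) (hq : q ∈ Q) (r : ℝ) (hr : 0 < r) :
    ∃ a ∈ (P : Set (EuclideanSpace ℝ (Fin n))) ∩ ball p r,
      ∃ b ∈ (Q : Set (EuclideanSpace ℝ (Fin n))) ∩ ball q r,
        ∀ x ∈ segment ℝ a b, x ∉ E := by
  rcases Nat.eq_zero_or_pos n with h0 | hn
  · exfalso
    apply hPQ
    subst h0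
    have hsub : Subsingleton (EuclideanSpace ℝ (Fin 0)) :=
      ⟨fun a b => by ext i; exact i.elim0⟩
    exact SetLike.ext fun x =>
      ⟨fun _ => (Subsingleton.elim x q) ▸ hq, fun _ => (Subsingleton.elim x p) ▸ hp⟩
  obtain ⟨f, hf⟩ := hyperplane_functional hn P.direction hPdim
  obtain ⟨g, hg⟩ := hyperplane_functional hn Q.direction hQdim
  -- pick w ∈ Q.direction with f (q - p + w) ≠ 0
  obtain ⟨w, hwQ, hwn, hfw⟩ : ∃ w ∈ Q.direction, ‖w‖ < r / 2 ∧ f (q - p + w) ≠ 0 := by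
    apply aux_pick f Q.direction (q - p) (r / 2) (by linarith)
    intro hfu
    by_contra hno
    push_neg at hno
    have hle : Q.direction ≤ P.direction := fun x hx => (hf x).mp (hno x hx)
    have heqd : Q.direction = P.direction :=
      Submodule.eq_of_le_of_finrank_le hle (by rw [hPdim, hQdim])
    have hqP : q ∈ P := by
      have h1 : q - p ∈ P.direction := (hf _).mp hfu
      have h2 := AffineSubspace.vadd_mem_of_mem_direction h1 hp
      have h3 : (q - p) +ᵥ p = q := by simp
      rwa [h3] at h2
    exact hPQ (AffineSubspace.ext_of_direction_eq heqd.symm ⟨q, hqP, hq⟩)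
  -- pick v ∈ P.direction with g (q - p - v) ≠ 0
  obtain ⟨v', hv'P, hv'n, hgv'⟩ : ∃ v' ∈ P.direction, ‖v'‖ < r / 2 ∧ g (q - p + v') ≠ 0 := by
    apply aux_pick g P.direction (q - p) (r / 2) (by linarith)
    intro hgu
    by_contra hno
    push_neg at hno
    have hle : P.direction ≤ Q.direction := fun x hx => (hg x).mp (hno x hx)
    have heqd : P.direction = Q.direction :=
      Submodule.eq_of_le_of_finrank_le hle (by rw [hPdim, hQdim])
    have hpQ : p ∈ Q := by
      have h1 : q - p ∈ Q.direction := (hg _).mp hgu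
      have h2 := AffineSubspace.vadd_mem_of_mem_direction (Q.direction.neg_mem h1) hq
      have h3 : -(q - p) +ᵥ q = p := by rw [vadd_eq_add]; abel
      rwa [h3] at h2
    exact hPQ (AffineSubspace.ext_of_direction_eq heqd ⟨p, hp, hpQ⟩)
  set v : EuclideanSpace ℝ (Fin n) := -v' with hv
  have hvP : v ∈ P.direction := P.direction.neg_mem hv'P
  have hvn : ‖v‖ < r / 2 := by rwa [hv, norm_neg]
  set p' : EuclideanSpace ℝ (Fin n) := p + v with hp'
  set q' : EuclideanSpace ℝ (Fin n) := q + w with hq'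
  set d : EuclideanSpace ℝ (Fin n) := q' - p' with hd
  have hp'P : p' ∈ P := by
    have h2 := AffineSubspace.vadd_mem_of_mem_direction hvP hp
    have h3 : v +ᵥ p = p' := by rw [hp']; exact add_comm v p
    rwa [h3] at h2
  have hq'Q : q' ∈ Q := by
    have h2 := AffineSubspace.vadd_mem_of_mem_direction hwQ hq
    have h3 : w +ᵥ q = q' := by rw [hq']; exact add_comm w q
    rwa [h3] at h2
  have hfd : f d ≠ 0 := by
    have h1 : d = (q - p + w) - v := by rw [hd, hp', hq']; abel
    rw [h1, map_sub, (hf v).mpr hvP, sub_zero]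
    exact hfw
  have hgd : g d ≠ 0 := by
    have h1 : d = (q - p + v') + w := by rw [hd, hp', hq', hv]; abel
    rw [h1, map_add, (hg w).mpr hwQ, add_zero]
    exact hgv'
  set a₀ : EuclideanSpace ℝ (Fin n) := p' - d with ha₀
  set b₀ : EuclideanSpace ℝ (Fin n) := p' + (2 : ℝ) • d with hb₀
  have hba : b₀ - a₀ = (3 : ℝ) • d := by rw [ha₀, hb₀]; module
  have hp'eq : a₀ + (1 / 3 : ℝ) • (b₀ - a₀) = p' := by rw [hba, ha₀]; module
  have hq'eq : a₀ + (2 / 3 : ℝ) • (b₀ - a₀) = q' := by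
    have : q' = p' + d := by rw [hd]; abel
    rw [hba, ha₀, this]; module
  set K : ℝ := |f b₀ - f a₀| with hK
  set κ : ℝ := |g b₀ - g a₀| with hκ
  have hKeq : f b₀ - f a₀ = 3 * f d := by
    rw [← map_sub, hba, map_smul, smul_eq_mul]
  have hκeq : g b₀ - g a₀ = 3 * g d := by
    rw [← map_sub, hba, map_smul, smul_eq_mul]
  have hK0 : 0 < K := by
    rw [hK, hKeq]
    exact abs_pos.mpr (mul_ne_zero three_ne_zero hfd)
  have hκ0 : 0 < κ := by
    rw [hκ, hκeq]
    exact abs_pos.mpr (mul_ne_zero three_ne_zero hgd)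
  set Cf : ℝ := 1 + ‖b₀ - a₀‖ * 3 * ‖f‖ / K with hCf
  set Cg : ℝ := 1 + ‖b₀ - a₀‖ * 3 * ‖g‖ / κ with hCg
  have hCf0 : 0 < Cf := by
    rw [hCf]
    have : 0 ≤ ‖b₀ - a₀‖ * 3 * ‖f‖ / K := by positivity
    linarith
  have hCg0 : 0 < Cg := by
    rw [hCg]
    have : 0 ≤ ‖b₀ - a₀‖ * 3 * ‖g‖ / κ := by positivity
    linarith
  have hKle : K ≤ |f b₀ - f a₀| := le_rfl
  have hκle : κ ≤ |g b₀ - g a₀| := le_rfl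
  clear_value v p' q' d a₀ b₀ K κ Cf Cg
  obtain ⟨ε, hε0, hε1, hε2, hε3, hε4⟩ : ∃ ε : ℝ, 0 < ε ∧ ε ≤ K / (16 * (‖f‖ + 1)) ∧
      ε ≤ κ / (16 * (‖g‖ + 1)) ∧ ε ≤ r / (4 * Cf) ∧ ε ≤ r / (4 * Cg) := by
    refine ⟨min (min (K / (16 * (‖f‖ + 1))) (κ / (16 * (‖g‖ + 1))))
      (min (r / (4 * Cf)) (r / (4 * Cg))), ?_, ?_, ?_, ?_, ?_⟩
    · apply lt_min (lt_min (by positivity) (by positivity))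
        (lt_min (by positivity) (by positivity))
    · exact le_trans (min_le_left _ _) (min_le_left _ _)
    · exact le_trans (min_le_left _ _) (min_le_right _ _)
    · exact le_trans (min_le_right _ _) (min_le_left _ _)
    · exact le_trans (min_le_right _ _) (min_le_right _ _)
  obtain ⟨a', b', hda, hdb, hseg⟩ := hE a₀ b₀ ε hε0
  have ha' : ‖a' - a₀‖ ≤ ε := by
    rw [← dist_eq_norm, dist_comm]
    exact hda.le
  have hb' : ‖b' - b₀‖ ≤ ε := by
    rw [← dist_eq_norm, dist_comm]
    exact hdb.le
  have hsmallf : ‖f‖ * ε ≤ K / 16 := by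
    rw [le_div_iff₀ (by positivity)] at hε1
    nlinarith [norm_nonneg f, hε0.le]
  have hsmallg : ‖g‖ * ε ≤ κ / 16 := by
    rw [le_div_iff₀ (by positivity)] at hε2
    nlinarith [norm_nonneg g, hε0.le]
  obtain ⟨a, haseg, hfa, hadist⟩ := crossing f a₀ b₀ a' b' (1/3) ε K
    (by norm_num) (by norm_num) hK0 hKle hε0.le ha' hb' hsmallf
  obtain ⟨b, hbseg, hgb, hbdist⟩ := crossing g a₀ b₀ a' b' (2/3) ε κ
    (by norm_num) (by norm_num) hκ0 hκle hε0.le ha' hb' hsmallg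
  rw [hp'eq] at hfa hadist
  rw [hq'eq] at hgb hbdist
  -- distance bounds
  have hadist2 : ‖a - p'‖ ≤ r / 4 := by
    have h1 := hε3
    rw [le_div_iff₀ (by positivity)] at h1
    have h2 : ε + ‖b₀ - a₀‖ * (3 * ‖f‖ * ε / K) = ε * Cf := by
      rw [hCf]; field_simp
    rw [h2] at hadist
    nlinarith
  have hbdist2 : ‖b - q'‖ ≤ r / 4 := by
    have h1 := hε4
    rw [le_div_iff₀ (by positivity)] at h1
    have h2 : ε + ‖b₀ - a₀‖ * (3 * ‖g‖ * ε / κ) = ε * Cg := by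
      rw [hCg]; field_simp
    rw [h2] at hbdist
    nlinarith
  -- memberships
  have haP : a ∈ P := by
    have h1 : f (a - p') = 0 := by rw [map_sub, hfa, sub_self]
    have h2 : a - p' ∈ P.direction := (hf _).mp h1
    have h3 := (AffineSubspace.vsub_right_mem_direction_iff_mem hp'P a).mp
      (by rwa [vsub_eq_sub])
    exact h3
  have hbQ : b ∈ Q := by
    have h1 : g (b - q') = 0 := by rw [map_sub, hgb, sub_self]
    have h2 : b - q' ∈ Q.direction := (hg _).mp h1
    have h3 := (AffineSubspace.vsub_right_mem_direction_iff_mem hq'Q b).mp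
      (by rwa [vsub_eq_sub])
    exact h3
  have haball : a ∈ ball p r := by
    rw [mem_ball, dist_eq_norm]
    have h1 : ‖a - p‖ ≤ ‖a - p'‖ + ‖p' - p‖ := norm_sub_le_norm_sub_add_norm_sub a p' p
    have h2 : ‖p' - p‖ = ‖v‖ := by rw [hp']; congr 1; abel
    linarith
  have hbball : b ∈ ball q r := by
    rw [mem_ball, dist_eq_norm]
    have h1 : ‖b - q‖ ≤ ‖b - q'‖ + ‖q' - q‖ := norm_sub_le_norm_sub_add_norm_sub b q' q
    have h2 : ‖q' - q‖ = ‖w‖ := by rw [hq']; congr 1; abel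
    linarith
  refine ⟨a, ⟨haP, haball⟩, b, ⟨hbQ, hbball⟩, ?_⟩
  intro x hx
  exact hseg x ((convex_segment a' b').segment_subset haseg hbseg hx)
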